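/- Let X be a compact connected metric space, M > 1 a real number, n₀ a positive integer with 4·M^{-n₀} < diam X / 4, and let X_{n₀} be a maximal M^{-n₀}-net in X. Then there exist an isometric embedding ι : X → ℓ^∞ and a compact connected set Γ ⊆ ℓ^∞ that is a finite union of line segments with ι(X_{n₀}) ⊆ Γ, such that for every x ∈ X_{n₀} and every r ∈ (4M^{-n₀}, diam X / 4): H¹(Γ ∩ B(ι(x), r/2)) ≤ 8·M^{-n₀}·#{y ∈ X_{n₀} : d(x,y) < r}. -/

import Mathlib

open Metric Set MeasureTheory

noncomputable section

/-- `ℓ^∞`, the Banach space of bounded real sequences with the sup norm. -/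
abbrev lInf : Type := lp (fun _ : ℕ => ℝ) ⊤

instance : MeasurableSpace lInf := borel lInf
instance : BorelSpace lInf := ⟨rfl⟩

/-- A `δ`-separated set in a compact metric space is finite. -/
lemma aux_finite_of_separated {X : Type*} [MetricSpace X] [CompactSpace X] {δ : ℝ} (hδ : 0 < δ)
    {N : Set X} (hsep : ∀ x ∈ N, ∀ y ∈ N, x ≠ y → δ ≤ dist x y) : N.Finite := by
  have htb : TotallyBounded (univ : Set X) := isCompact_univ.totallyBounded
  obtain ⟨t, htf, htc⟩ := Metric.totallyBounded_iff.mp htb (δ / 2) (by linarith)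
  have hmem : ∀ x : X, ∃ c, c ∈ t ∧ x ∈ ball c (δ / 2) := by
    intro x
    have := htc (mem_univ x)
    simpa using this
  choose f hf1 hf2 using hmem
  have hinj : Set.InjOn f N := by
    intro a ha b hb hab
    by_contra hne
    have h1 := hf2 a
    have h2 := hf2 b
    rw [mem_ball] at h1 h2
    have hsep' := hsep a ha b hb hne
    have : dist a b ≤ dist a (f a) + dist (f b) b := by
      rw [hab]; exact (dist_triangle a (f b) b)
    rw [dist_comm (f b) b] at this
    linarith
  have himg : (f '' N).Finite := htf.subset (by rintro _ ⟨x, _, rfl⟩; exact hf1 x)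
  exact Set.Finite.of_finite_image himg hinj

/-- In a connected space, a proper nonempty subset of a `δ`-net has a point within `2δ` of the
complement in the net. -/
lemma aux_exists_close_pair {X : Type*} [MetricSpace X] [ConnectedSpace X] [DecidableEq X] {δ : ℝ} (hδ : 0 < δ)
    (s : Finset X) (hnet : ∀ x : X, ∃ y ∈ s, dist x y ≤ δ)
    (A : Finset X) (hAs : A ⊆ s) (hA : A.Nonempty) (hAne : A ≠ s) :
    ∃ a ∈ A, ∃ b ∈ s, b ∉ A ∧ dist a b ≤ 2 * δ := by
  by_contra hcon
  push_neg at hcon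
  set U : Set X := ⋃ a ∈ (A : Set X), closedBall a δ with hU
  set V : Set X := ⋃ b ∈ ((s \ A : Finset X) : Set X), closedBall b δ with hV
  have hUV : U ∪ V = univ := by
    apply eq_univ_of_forall
    intro x
    obtain ⟨y, hy, hyd⟩ := hnet x
    by_cases hyA : y ∈ A
    · exact Or.inl (mem_biUnion hyA (mem_closedBall.mpr hyd))
    · exact Or.inr (mem_biUnion (by simp [hy, hyA]) (mem_closedBall.mpr hyd))
  have hdisj : ∀ z, z ∈ U → z ∉ V := by
    intro z hzU hzV
    obtain ⟨_, ⟨a, rfl⟩, _, ⟨ha, rfl⟩, hza⟩ := hzU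
    obtain ⟨_, ⟨b, rfl⟩, _, ⟨hb, rfl⟩, hzb⟩ := hzV
    rw [Finset.mem_coe, Finset.mem_sdiff] at hb
    have : dist a b ≤ 2 * δ := by
      have := dist_triangle a z b
      rw [mem_closedBall, dist_comm] at hza
      rw [mem_closedBall] at hzb
      linarith [dist_comm z b ▸ hzb]
    exact absurd this (not_le.mpr (hcon a ha b hb.1 hb.2))
  have hUclosed : IsClosed U := A.finite_toSet.isClosed_biUnion (fun _ _ => isClosed_closedBall)
  have hVclosed : IsClosed V := (s \ A).finite_toSet.isClosed_biUnion
    (fun _ _ => isClosed_closedBall)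
  have hUVc : U = Vᶜ := by
    ext x
    constructor
    · exact fun hx => hdisj x hx
    · intro hx
      rcases (eq_univ_iff_forall.mp hUV x) with h | h
      · exact h
      · exact absurd h hx
  have hclopen : IsClopen U := ⟨hUclosed, hUVc ▸ hVclosed.isOpen_compl⟩
  rcases isClopen_iff.mp hclopen with h | h
  · obtain ⟨a, ha⟩ := hA
    have : a ∈ U := mem_biUnion ha (mem_closedBall_self (le_of_lt hδ))
    rw [h] at this
    exact this
  · obtain ⟨b, hbs, hbA⟩ := Finset.exists_of_ssubset (lt_of_le_of_ne hAs hAne)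
    have hbU : b ∈ U := h ▸ mem_univ b
    obtain ⟨_, ⟨a, rfl⟩, _, ⟨ha, rfl⟩, hba⟩ := hbU
    rw [mem_closedBall] at hba
    have : dist a b ≤ 2 * δ := by rw [dist_comm] at hba; linarith
    exact absurd this (not_le.mpr (hcon a ha b hbs hbA))

/-- Chain enumeration of a finite set where each proper nonempty subset sees the rest within
`2δ`. -/
lemma aux_exists_chain_list {X : Type*} [MetricSpace X] [DecidableEq X] {δ : ℝ} (s : Finset X) (hs : s.Nonempty)
    (hconn : ∀ A : Finset X, A ⊆ s → A.Nonempty → A ≠ s →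
      ∃ a ∈ A, ∃ b ∈ s, b ∉ A ∧ dist a b ≤ 2 * δ) :
    ∃ l : List X, l.Nodup ∧ l.toFinset = s ∧ l ≠ [] ∧
      ∀ i : Fin l.length, i.val ≠ 0 →
        ∃ j : Fin l.length, j.val < i.val ∧ dist (l.get i) (l.get j) ≤ 2 * δ := by
  classical
  obtain ⟨x₀, hx₀⟩ := hs
  -- property of partial chains
  set P : List X → Prop := fun l => l.Nodup ∧ l.toFinset ⊆ s ∧ l ≠ [] ∧
      ∀ i : Fin l.length, i.val ≠ 0 →
        ∃ j : Fin l.length, j.val < i.val ∧ dist (l.get i) (l.get j) ≤ 2 * δ with hP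
  have key : ∀ n : ℕ, ∀ l : List X, P l → s.card ≤ l.length + n →
      ∃ l' : List X, P l' ∧ l'.toFinset = s := by
    intro n
    induction n with
    | zero =>
      intro l hl hcard
      refine ⟨l, hl, ?_⟩
      have hlen : l.toFinset.card = l.length := List.toFinset_card_of_nodup hl.1
      exact Finset.eq_of_subset_of_card_le hl.2.1 (by omega)
    | succ n ih =>
      intro l hl hcard
      by_cases hfull : l.toFinset = s
      · exact ⟨l, hl, hfull⟩
      · have hlne : l.toFinset.Nonempty := by
          rcases List.exists_mem_of_ne_nil l hl.2.2.1 with ⟨a, ha⟩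
          exact ⟨a, List.mem_toFinset.mpr ha⟩
        obtain ⟨a, ha, b, hbs, hbA, hd⟩ := hconn l.toFinset hl.2.1 hlne hfull
        have hbl : b ∉ l := fun h => hbA (List.mem_toFinset.mpr h)
        refine ih (l ++ [b]) ⟨?_, ?_, ?_, ?_⟩ ?_
        · rw [List.nodup_append]
          exact ⟨hl.1, List.nodup_singleton b, by simpa using fun (a : X) (ha : a ∈ l) (h : a = b) => hbl (h ▸ ha)⟩
        · intro y hy
          rw [List.toFinset_append, Finset.mem_union] at hy
          rcases hy with hy | hy
          · exact hl.2.1 hy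
          · simp at hy; subst hy; exact hbs
        · simp
        · intro i hi
          have hlen : (l ++ [b]).length = l.length + 1 := by simp
          by_cases hil : i.val < l.length
          · have hgi : (l ++ [b]).get i = l.get ⟨i.val, hil⟩ := by
              simp [List.getElem_append_left hil]
            obtain ⟨j, hj1, hj2⟩ := hl.2.2.2 ⟨i.val, hil⟩ hi
            refine ⟨⟨j.val, by omega⟩, by simpa using hj1, ?_⟩
            have hgj : (l ++ [b]).get ⟨j.val, by omega⟩ = l.get j := by
              simp [List.getElem_append_left j.isLt]
            rw [hgi, hgj]
            exact hj2
          · have hieq : i.val = l.length := by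
              have := i.isLt
              omega
            have hgi : (l ++ [b]).get i = b := by
              have : (l ++ [b]).get i = (l ++ [b]).get ⟨l.length, by simp⟩ := by
                congr 1
                exact Fin.ext hieq
              rw [this]
              simp
            obtain ⟨ja, hja⟩ := List.mem_iff_get.mp (List.mem_toFinset.mp ha)
            have hja_lt : ja.val < (l ++ [b]).length := by
              have := ja.isLt; simp
            refine ⟨⟨ja.val, hja_lt⟩, ?_, ?_⟩
            · show ja.val < i.val
              have := ja.isLt
              omega
            have hgj : (l ++ [b]).get ⟨ja.val, hja_lt⟩ = l.get ja := by
              simp [List.getElem_append_left ja.isLt]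
            rw [hgi, hgj, hja, dist_comm]
            exact hd
        · have : (l ++ [b]).length = l.length + 1 := by simp
          omega
  have hP0 : P [x₀] := by
    refine ⟨List.nodup_singleton x₀, by simpa using hx₀, by simp, ?_⟩
    intro i hi
    exact absurd (Nat.lt_one_iff.mp (by simpa using i.isLt)) hi
  obtain ⟨l, hl, hfull⟩ := key s.card [x₀] hP0 (by simp)
  exact ⟨l, hl.1, hfull, hl.2.2.1, hl.2.2.2⟩

lemma aux_isCompact_segment (p q : lInf) : IsCompact (segment ℝ p q) := by
  rw [segment_eq_image]
  exact isCompact_Icc.image (by fun_prop)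

/-- **Lemma (approximating tree).** Let `X` be a compact connected metric space, `M > 1`,
`n₀ ≥ 1` with `4·M^{-n₀} < diam X / 4`, and let `N` be a maximal `M^{-n₀}`-net in `X`. Then
`X` embeds isometrically into `ℓ^∞` by a map `ι` such that there is a compact connected set
`Γ ⊆ ℓ^∞`, a finite union of line segments, containing `ι(N)`, with
`H¹(Γ ∩ B(ι x, r/2)) ≤ 8·M^{-n₀}·#{y ∈ N : d(x,y) < r}` for all `x ∈ N` and
`r ∈ (4M^{-n₀}, diam X / 4)`. -/
theorem approximating_tree_exists :
    ∀ (X : Type*) [MetricSpace X], CompactSpace X → ConnectedSpace X →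
      ∀ M : ℝ, 1 < M → ∀ n₀ : ℕ, 0 < n₀ →
        4 * M ^ (-(n₀ : ℤ)) < Metric.diam (Set.univ : Set X) / 4 →
        ∀ N : Set X,
          (∀ x ∈ N, ∀ y ∈ N, x ≠ y → M ^ (-(n₀ : ℤ)) ≤ dist x y) →
          (∀ x : X, ∃ y ∈ N, dist x y ≤ M ^ (-(n₀ : ℤ))) →
          ∃ ι : X → lInf, Isometry ι ∧
            ∃ Γ : Set lInf, IsCompact Γ ∧ IsConnected Γ ∧
              (∃ (k : ℕ) (p q : Fin k → lInf), Γ = ⋃ i, segment ℝ (p i) (q i)) ∧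
              ι '' N ⊆ Γ ∧
              ∀ x ∈ N, ∀ r : ℝ, 4 * M ^ (-(n₀ : ℤ)) < r →
                r < Metric.diam (Set.univ : Set X) / 4 →
                μH[1] (Γ ∩ Metric.ball (ι x) (r / 2)) ≤
                  ENNReal.ofReal (8 * M ^ (-(n₀ : ℤ)) * ({y ∈ N | dist x y < r}).ncard) := by
  classical
  intro X _ hcomp hconn M hM n₀ hn₀ hdiam N hsep hnet
  set δ : ℝ := M ^ (-(n₀ : ℤ)) with hδdef
  have hδ : 0 < δ := zpow_pos (by linarith) _
  -- X is nonempty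
  have hXne : Nonempty X := by
    by_contra h
    rw [not_nonempty_iff] at h
    have : (univ : Set X) = ∅ := Set.univ_eq_empty_iff.mpr h
    rw [this, Metric.diam_empty] at hdiam
    linarith
  -- N is finite
  have hNfin : N.Finite := aux_finite_of_separated hδ hsep
  set s : Finset X := hNfin.toFinset with hsdef
  have hsN : (s : Set X) = N := hNfin.coe_toFinset
  have hmem_s : ∀ y, y ∈ s ↔ y ∈ N := fun y => hNfin.mem_toFinset
  have hs_ne : s.Nonempty := by
    obtain ⟨y, hy, _⟩ := hnet (Classical.arbitrary X)
    exact ⟨y, (hmem_s y).mpr hy⟩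
  -- chain enumeration
  have hconn' : ∀ A : Finset X, A ⊆ s → A.Nonempty → A ≠ s →
      ∃ a ∈ A, ∃ b ∈ s, b ∉ A ∧ dist a b ≤ 2 * δ := by
    intro A hAs hA hAne
    exact aux_exists_close_pair hδ s (fun x => by
      obtain ⟨y, hy, hyd⟩ := hnet x
      exact ⟨y, (hmem_s y).mpr hy, hyd⟩) A hAs hA hAne
  obtain ⟨l, hnodup, htofin, hlne, hchain⟩ := aux_exists_chain_list s hs_ne hconn'
  set m : ℕ := l.length with hmdef
  have hm : 0 < m := List.length_pos_iff.mpr hlne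
  set σ : Fin m → X := l.get with hσdef
  have hσinj : Function.Injective σ := List.nodup_iff_injective_get.mp hnodup
  have hσN : ∀ i, σ i ∈ N := by
    intro i
    have : σ i ∈ l := List.get_mem l i
    exact (hmem_s _).mp (htofin ▸ List.mem_toFinset.mpr this)
  have hσsurj : ∀ y ∈ N, ∃ i, σ i = y := by
    intro y hy
    have : y ∈ l := List.mem_toFinset.mp (htofin ▸ (hmem_s y).mpr hy)
    obtain ⟨i, hi⟩ := List.mem_iff_get.mp this
    exact ⟨i, hi⟩
  -- parent function
  have hpar_ex : ∀ i : Fin m, ∃ j : Fin m,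
      (i.val ≠ 0 → j.val < i.val) ∧ dist (σ i) (σ j) ≤ 2 * δ := by
    intro i
    by_cases h : i.val = 0
    · refine ⟨i, fun h' => absurd h h', ?_⟩
      rw [dist_self]
      positivity
    · obtain ⟨j, hj1, hj2⟩ := hchain i h
      exact ⟨j, fun _ => hj1, hj2⟩
  choose par hpar1 hpar2 using hpar_ex
  -- embedding
  set ι : X → lInf := kuratowskiEmbedding X with hιdef
  have hι : Isometry ι := kuratowskiEmbedding.isometry X
  set p : Fin m → lInf := fun i => ι (σ i) with hpdef
  set q : Fin m → lInf := fun i => ι (σ (par i)) with hqdef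
  have hlen : ∀ i, dist (p i) (q i) ≤ 2 * δ := by
    intro i
    rw [hι.dist_eq]
    exact hpar2 i
  set Γ : Set lInf := ⋃ i, segment ℝ (p i) (q i) with hΓdef
  refine ⟨ι, hι, Γ, ?_, ?_, ⟨m, p, q, rfl⟩, ?_, ?_⟩
  -- compactness
  · exact isCompact_iUnion (fun i => aux_isCompact_segment (p i) (q i))
  -- connectedness
  · set U : ℕ → Set lInf := fun k => ⋃ i : Fin m, ⋃ (_ : i.val ≤ k), segment ℝ (p i) (q i)
      with hUdef
    have hUconn : ∀ k, IsConnected (U k) := by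
      intro k
      induction k with
      | zero =>
        have hU0 : U 0 = segment ℝ (p ⟨0, hm⟩) (q ⟨0, hm⟩) := by
          apply Set.Subset.antisymm
          · intro z hz
            simp only [hUdef, mem_iUnion] at hz
            obtain ⟨i, hi, hzi⟩ := hz
            have : i = ⟨0, hm⟩ := Fin.ext (by show i.val = 0; omega)
            rwa [this] at hzi
          · intro z hz
            simp only [hUdef, mem_iUnion]
            exact ⟨⟨0, hm⟩, le_refl 0, hz⟩
        rw [hU0]
        exact ⟨⟨p ⟨0, hm⟩, left_mem_segment ℝ _ _⟩, (convex_segment _ _).isPreconnected⟩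
      | succ k ih =>
        by_cases h : k + 1 < m
        · have hUk : U (k + 1) = U k ∪ segment ℝ (p ⟨k + 1, h⟩) (q ⟨k + 1, h⟩) := by
            apply Set.Subset.antisymm
            · intro z hz
              simp only [hUdef, mem_iUnion] at hz
              obtain ⟨i, hi, hzi⟩ := hz
              by_cases hik : i.val ≤ k
              · exact Or.inl (by simp only [hUdef, mem_iUnion]; exact ⟨i, hik, hzi⟩)
              · have : i = ⟨k + 1, h⟩ := Fin.ext (by show i.val = k + 1; omega)
                exact Or.inr (this ▸ hzi)
            · rintro z (hz | hz)
              · simp only [hUdef, mem_iUnion] at hz ⊢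
                obtain ⟨i, hi, hzi⟩ := hz
                exact ⟨i, by omega, hzi⟩
              · simp only [hUdef, mem_iUnion]
                exact ⟨⟨k + 1, h⟩, le_refl _, hz⟩
          rw [hUk]
          apply IsConnected.union ?_ ih
            ⟨⟨p ⟨k + 1, h⟩, left_mem_segment ℝ _ _⟩, (convex_segment _ _).isPreconnected⟩
          · refine ⟨q ⟨k + 1, h⟩, ?_, right_mem_segment ℝ _ _⟩
            have hparlt : (par ⟨k + 1, h⟩).val ≤ k := by
              have h1 := hpar1 ⟨k + 1, h⟩ (by simp)
              have h2 : ((⟨k + 1, h⟩ : Fin m)).val = k + 1 := rfl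
              omega
            simp only [hUdef, mem_iUnion]
            exact ⟨par ⟨k + 1, h⟩, hparlt, left_mem_segment ℝ _ _⟩
        · have : U (k + 1) = U k := by
            apply Set.Subset.antisymm
            · intro z hz
              simp only [hUdef, mem_iUnion] at hz ⊢
              obtain ⟨i, hi, hzi⟩ := hz
              exact ⟨i, by have := i.isLt; omega, hzi⟩
            · intro z hz
              simp only [hUdef, mem_iUnion] at hz ⊢
              obtain ⟨i, hi, hzi⟩ := hz
              exact ⟨i, by omega, hzi⟩
          rw [this]
          exact ih
    have hΓU : Γ = U m := by
      apply Set.Subset.antisymm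
      · intro z hz
        simp only [hΓdef, mem_iUnion] at hz
        obtain ⟨i, hzi⟩ := hz
        simp only [hUdef, mem_iUnion]
        exact ⟨i, le_of_lt i.isLt, hzi⟩
      · intro z hz
        simp only [hUdef, mem_iUnion] at hz
        obtain ⟨i, _, hzi⟩ := hz
        exact mem_iUnion.mpr ⟨i, hzi⟩
    rw [hΓU]
    exact hUconn m
  -- contains ι '' N
  · rintro _ ⟨y, hy, rfl⟩
    obtain ⟨i, rfl⟩ := hσsurj y hy
    exact mem_iUnion.mpr ⟨i, left_mem_segment ℝ _ _⟩
  -- measure bound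
  · intro x hx r hr1 _
    set B : Set lInf := Metric.ball (ι x) (r / 2) with hBdef
    set S : Set X := {y ∈ N | dist x y < r} with hSdef
    have hSfin : S.Finite := hNfin.subset (sep_subset _ _)
    set T : Finset (Fin m) :=
      Finset.univ.filter (fun i => (segment ℝ (p i) (q i) ∩ B).Nonempty) with hTdef
    -- each edge meeting B has its "child" endpoint in S
    have hTS : ∀ i ∈ T, σ i ∈ S := by
      intro i hiT
      rw [hTdef, Finset.mem_filter] at hiT
      obtain ⟨z, hz1, hz2⟩ := hiT.2
      have hzball : z ∈ closedBall (p i) (dist (p i) (q i)) :=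
        (convex_closedBall _ _).segment_subset (mem_closedBall_self dist_nonneg)
          (mem_closedBall.mpr (le_of_eq (dist_comm (q i) (p i)))) hz1
      rw [mem_closedBall] at hzball
      rw [hBdef, mem_ball] at hz2
      have hdist : dist (p i) (ι x) < r := by
        have h1 := dist_triangle (p i) z (ι x)
        have h2 := hlen i
        have h3 : dist (p i) z ≤ 2 * δ := by
          rw [dist_comm]
          exact le_trans hzball h2
        have h4 : 2 * δ < r / 2 := by linarith
        linarith
      rw [hpdef] at hdist
      rw [hι.dist_eq] at hdist
      exact ⟨hσN i, by rw [dist_comm]; exact hdist⟩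
    -- cardinality bound
    have hcard : T.card ≤ S.ncard := by
      rw [Set.ncard_eq_toFinset_card S hSfin]
      exact Finset.card_le_card_of_injOn σ (fun i hi => hSfin.mem_toFinset.mpr (hTS i hi))
        (fun a _ b _ hab => hσinj hab)
    -- measure computation
    have step1 : μH[1] (Γ ∩ B) ≤ ∑ i : Fin m, μH[1] (segment ℝ (p i) (q i) ∩ B) := by
      rw [hΓdef, Set.iUnion_inter]
      exact measure_iUnion_fintype_le _ _
    have step2 : ∑ i : Fin m, μH[1] (segment ℝ (p i) (q i) ∩ B)
        = ∑ i ∈ T, μH[1] (segment ℝ (p i) (q i) ∩ B) := by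
      symm
      apply Finset.sum_subset (Finset.subset_univ T)
      intro i _ hiT
      rw [hTdef, Finset.mem_filter] at hiT
      push_neg at hiT
      rw [hiT (Finset.mem_univ i), measure_empty]
    have step3 : ∑ i ∈ T, μH[1] (segment ℝ (p i) (q i) ∩ B)
        ≤ T.card • ENNReal.ofReal (2 * δ) := by
      apply Finset.sum_le_card_nsmul
      intro i _
      calc μH[1] (segment ℝ (p i) (q i) ∩ B) ≤ μH[1] (segment ℝ (p i) (q i)) :=
            measure_mono inter_subset_left
        _ = edist (p i) (q i) := hausdorffMeasure_segment _ _
        _ = ENNReal.ofReal (dist (p i) (q i)) := edist_dist _ _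
        _ ≤ ENNReal.ofReal (2 * δ) := ENNReal.ofReal_le_ofReal (hlen i)
    have step4 : (T.card : ENNReal) • ENNReal.ofReal (2 * δ)
        ≤ ENNReal.ofReal (8 * δ * S.ncard) := by
      rw [smul_eq_mul, ← ENNReal.ofReal_natCast, ← ENNReal.ofReal_mul (by positivity)]
      apply ENNReal.ofReal_le_ofReal
      have h1 : (T.card : ℝ) ≤ (S.ncard : ℝ) := by exact_mod_cast hcard
      nlinarith [hδ.le, Nat.cast_nonneg (α := ℝ) T.card]
    calc μH[1] (Γ ∩ B) ≤ ∑ i : Fin m, μH[1] (segment ℝ (p i) (q i) ∩ B) := step1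
      _ = ∑ i ∈ T, μH[1] (segment ℝ (p i) (q i) ∩ B) := step2
      _ ≤ T.card • ENNReal.ofReal (2 * δ) := step3
      _ ≤ ENNReal.ofReal (8 * δ * S.ncard) := by
          rw [← smul_eq_mul] at step4 ⊢
          simpa using step4
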